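/- Unblocked cubes are rare: for L ∈ N call the cube B_L(0) := [−L, L)^d blocked if for every 1 ≤ i ≤ d and every choice of coordinates k_j ∈ [−L, L) for j ≠ i, there exists m_i ∈ [−L, L) such that ω(k₁e₁ + ⋯ + m_i e_i + ⋯ + k_d e_d) = 1; otherwise call it unblocked. Then p_L := Q( B_L(0) is unblocked ) → 0 as L → ∞. -/

import Mathlib

open MeasureTheory ProbabilityTheory Filter
open scoped ENNReal Topology

namespace RWDPP

attribute [local instance] Classical.propDecidable


/-- Configuration space `Ω = {0,1}^{ℤ^d}`. -/
abbrev Cfg (d : ℕ) := (Fin d → ℤ) → Bool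

/-- Canonical shift `T_y ω (x) = ω (x + y)`. -/
def shift (d : ℕ) (y : Fin d → ℤ) (ω : Cfg d) : Cfg d := fun x => ω (x + y)

/-- Embedding of `ℤ^d` into `ℝ^d` (with the Euclidean norm). -/
def toE (d : ℕ) (x : Fin d → ℤ) : EuclideanSpace ℝ (Fin d) := WithLp.toLp 2 fun i => (x i : ℝ)

/-- Euclidean norm `|x|` of a lattice point. -/
noncomputable def nrm (d : ℕ) (x : Fin d → ℤ) : ℝ := ‖toE d x‖

/-- Sup norm `|x|_∞` of a lattice point. -/
def nrmInf (d : ℕ) (x : Fin d → ℤ) : ℕ := Finset.univ.sup fun i => (x i).natAbs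

/-- The `2d` unit vectors of `ℤ^d`. -/
def unitVecs (d : ℕ) : Set (Fin d → ℤ) :=
  {e | ∃ i : Fin d, e = Pi.single i 1 ∨ e = Pi.single i (-1)}

/-- `γ_e(ω) = inf {k ≥ 1 : ω(k e) = 1}`. -/
noncomputable def gamma (d : ℕ) (e : Fin d → ℤ) (ω : Cfg d) : ℕ :=
  sInf {k : ℕ | 1 ≤ k ∧ ω ((k : ℤ) • e) = true}

/-- The nearest neighbor of `x` in direction `e`: `x + γ_e(T_x ω) e`. -/
noncomputable def nbr (d : ℕ) (ω : Cfg d) (x e : Fin d → ℤ) : Fin d → ℤ :=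
  x + (gamma d e (shift d x ω) : ℤ) • e

/-- The set `N_x(ω)` of the `2d` nearest neighbors of `x`. -/
noncomputable def nbrs (d : ℕ) (ω : Cfg d) (x : Fin d → ℤ) : Set (Fin d → ℤ) :=
  {y | ∃ e ∈ unitVecs d, y = nbr d ω x e}

/-- `(p 0, …, p m)` is a `𝒫(ω)`-nearest neighbor path. -/
def IsPath (d : ℕ) (ω : Cfg d) (p : ℕ → Fin d → ℤ) (m : ℕ) : Prop :=
  ω (p 0) = true ∧ ∀ k, 1 ≤ k → k ≤ m → p k ∈ nbrs d ω (p (k - 1))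

/-- The event `Ω₀ = {ω : ω(0) = 1}`. -/
def Omega0 (d : ℕ) : Set (Cfg d) := {ω | ω 0 = true}

/-- The σ-field generated by the coordinates in `A`. -/
def coordSigma (d : ℕ) (A : Set (Fin d → ℤ)) : MeasurableSpace (Cfg d) :=
  MeasurableSpace.comap (fun ω (x : A) => ω x) inferInstance

/-- Assumptions (A1)–(A3) on the law `Q` of the discrete point process. -/
structure Assumptions (d : ℕ) (Q : Measure (Cfg d)) : Prop where
  prob : IsProbabilityMeasure Q
  a1_pos : 0 < Q (Omega0 d)
  a1_lt : Q (Omega0 d) < 1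
  a2 : ∃ ℓ : ℝ, 0 < ℓ ∧ ∀ A B : Set (Fin d → ℤ),
    (∀ x ∈ A, ∀ y ∈ B, ℓ ≤ nrm d (x - y)) →
      Indep (coordSigma d A) (coordSigma d B) Q
  a3 : ∀ y : Fin d → ℤ, MeasurePreserving (shift d y) Q Q

/-- The conditioned measure `P = Q(·|Ω₀)`. -/
noncomputable def condP (d : ℕ) (Q : Measure (Cfg d)) : Measure (Cfg d) := Q[|Omega0 d]

/-- One-step transition probability of the RWDPP. -/
noncomputable def stepP (d : ℕ) (ω : Cfg d) (x y : Fin d → ℤ) : ℝ :=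
  if y ∈ nbrs d ω x then 1 / (2 * d) else 0

/-- Discrete trajectory space. -/
abbrev Traj (d : ℕ) := ℕ → Fin d → ℤ

/-- `μ` is the family of quenched laws `P_ω^z` of the RWDPP in the environment `ω`:
`μ z` is a probability measure with `μ z (X₀ = z) = 1` under which `(X_n)` is the Markov
chain with transition probability `1/(2d)` to each nearest neighbor. -/
def IsQuenchedLaw (d : ℕ) (ω : Cfg d) (μ : (Fin d → ℤ) → Measure (Traj d)) : Prop :=
  (∀ z, IsProbabilityMeasure (μ z)) ∧
  ∀ z, ω z = true → ∀ n : ℕ, ∀ x : Traj d,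
    μ z {p | ∀ k ≤ n, p k = x k} =
      (if x 0 = z then 1 else 0) *
        ∏ k ∈ Finset.range n, ENNReal.ofReal (stepP d ω (x k) (x (k + 1)))

/-- `P(N_{t} - N_{s} = k)` for a rate-one Poisson process, `r = t - s`. -/
noncomputable def poissonProb (r : ℝ) (k : ℕ) : ℝ≥0∞ :=
  ENNReal.ofReal (Real.exp (-r) * r ^ k / (Nat.factorial k))

/-- `ν` is the law of (the path of) a rate-one Poisson process `(N_t)_{t ≥ 0}`. -/
def IsPoissonPath (ν : Measure (ℝ → ℕ)) : Prop :=
  IsProbabilityMeasure ν ∧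
  (∀ᵐ η ∂ν, Monotone η ∧ ∀ t : ℝ, t ≤ 0 → η t = 0) ∧
  ∀ m : ℕ, ∀ t : ℕ → ℝ, 0 ≤ t 0 → Monotone t → ∀ k : ℕ → ℕ,
    ν {η | ∀ i < m, η (t (i + 1)) - η (t i) = k i} =
      ∏ i ∈ Finset.range m, poissonProb (t (i + 1) - t i) (k i)

/-- The continuous-time walk `Y_t = X_{N_t}`, realized on the product of the trajectory
space of the discrete walk and the path space of the Poisson process. -/
def Yt (d : ℕ) (q : Traj d × (ℝ → ℕ)) (t : ℝ) : Fin d → ℤ := q.1 (q.2 t)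

/-- `τ_n = inf {t ≥ 0 : |Y_t - Y_0| ≥ n}`. -/
noncomputable def hitTime (d : ℕ) (n : ℕ) (q : Traj d × (ℝ → ℕ)) : ℝ :=
  sInf {t : ℝ | 0 ≤ t ∧ (n : ℝ) ≤ nrm d (Yt d q t - Yt d q 0)}

/-- `max_{x ∈ 𝒫(ω), |x| ≤ n} g x` (Euclidean balls). -/
noncomputable def maxOn (d : ℕ) (ω : Cfg d) (g : (Fin d → ℤ) → ℝ) (n : ℕ) : ℝ :=
  sSup {r : ℝ | ∃ x, ω x = true ∧ nrm d x ≤ (n : ℝ) ∧ r = g x}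

/-- `max_{x ∈ 𝒫(ω), |x|_∞ ≤ n} g x` (sup-norm boxes). -/
noncomputable def maxOnInf (d : ℕ) (ω : Cfg d) (g : (Fin d → ℤ) → ℝ) (n : ℕ) : ℝ :=
  sSup {r : ℝ | ∃ x, ω x = true ∧ nrmInf d x ≤ n ∧ r = g x}

/-- The `2d` unit vectors, as a finite set. -/
noncomputable def unitFinset (d : ℕ) : Finset (Fin d → ℤ) :=
  (Finset.univ.image fun i : Fin d => (Pi.single i 1 : Fin d → ℤ)) ∪
    (Finset.univ.image fun i : Fin d => (Pi.single i (-1) : Fin d → ℤ))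

/-- `x ↦ x + ψ x` is harmonic on `𝒫(ω)` for the RWDPP transition probability. -/
def IsHarmonicDeform (d : ℕ) (ω : Cfg d) (ψ : (Fin d → ℤ) → EuclideanSpace ℝ (Fin d)) : Prop :=
  ∀ x, ω x = true →
    (1 / (2 * (d : ℝ))) • ∑ e ∈ unitFinset d, (toE d (nbr d ω x e) + ψ (nbr d ω x e))
      = toE d x + ψ x

/-- `‖(χ(x,·) - χ(y,·)) 1{x ∈ 𝒫} 1{y ∈ N_x}‖_{L²(P)}²`. -/
noncomputable def corrL2sq (d : ℕ) (P : Measure (Cfg d))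
    (χ : (Fin d → ℤ) → Cfg d → EuclideanSpace ℝ (Fin d)) (x y : Fin d → ℤ) : ℝ≥0∞ :=
  ∫⁻ ω, ENNReal.ofReal
    (if ω x = true ∧ y ∈ nbrs d ω x then ‖χ x ω - χ y ω‖ ^ 2 else 0) ∂P

/-- Graph distance on `𝒫(ω)` (`⊤` if not connected). -/
noncomputable def graphDist (d : ℕ) (ω : Cfg d) (x y : Fin d → ℤ) : ℕ∞ :=
  sInf {m : ℕ∞ | ∃ k : ℕ, m = (k : ℕ∞) ∧ ∃ p : Traj d, p 0 = x ∧ p k = y ∧ IsPath d ω p k}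

/-- The cube `B_L(0) = [-L, L)^d` is blocked: for every direction `i` and every choice of
the other coordinates `k_j ∈ [-L, L)`, some site of the corresponding line segment
belongs to `𝒫(ω)`. -/
def Blocked (d : ℕ) (L : ℕ) (ω : Cfg d) : Prop :=
  ∀ i : Fin d, ∀ k : Fin d → ℤ, (∀ j : Fin d, j ≠ i → -(L : ℤ) ≤ k j ∧ k j < L) →
    ∃ m : ℤ, -(L : ℤ) ≤ m ∧ m < L ∧ ω (Function.update k i m) = true

section Aux
variable {d : ℕ}

lemma nrm_single (i : Fin d) (c : ℤ) : nrm d (Pi.single i c) = |(c : ℝ)| := by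
  have h : toE d (Pi.single i c) = EuclideanSpace.single i (c : ℝ) := by
    ext j
    by_cases hj : j = i
    · subst hj; simp [toE, EuclideanSpace.single_apply]
    · simp [toE, EuclideanSpace.single_apply, hj, Pi.single_eq_of_ne hj]
  rw [nrm, h, EuclideanSpace.norm_single, Real.norm_eq_abs]

lemma coordSigma_forall_false {A : Set (Fin d → ℤ)} (hA : A.Countable) :
    MeasurableSet[coordSigma d A] {ω : Cfg d | ∀ x ∈ A, ω x = false} := by
  rw [coordSigma, MeasurableSpace.measurableSet_comap]
  haveI : Countable A := hA.to_subtype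
  refine ⟨⋂ a : A, (fun g : A → Bool => g a) ⁻¹' {false}, MeasurableSet.iInter fun a =>
    (measurable_pi_apply a) (measurableSet_singleton false), ?_⟩
  ext ω; simp

lemma coordSigma_single_false (y : Fin d → ℤ) :
    MeasurableSet[coordSigma d {y}] {ω : Cfg d | ω y = false} := by
  have h := coordSigma_forall_false (A := ({y} : Set (Fin d → ℤ))) (Set.countable_singleton y)
  convert h using 1
  ext ω; simp

/-- The `t`-th probe point on the line through `k` in direction `i`. -/
def pt (L s : ℕ) (i : Fin d) (k : Fin d → ℤ) (t : ℕ) : Fin d → ℤ :=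
  Function.update k i (-(L : ℤ) + t * s)

lemma pt_sub (L s : ℕ) (i : Fin d) (k : Fin d → ℤ) (t n : ℕ) :
    pt L s i k t - pt L s i k n = Pi.single i ((t : ℤ) * s - (n : ℤ) * s) := by
  funext j
  by_cases hj : j = i
  · subst hj; simp [pt, Pi.sub_apply]
  · simp [pt, Pi.sub_apply, Function.update_of_ne hj, Pi.single_eq_of_ne hj]

/-- The event that all probe points up to `n` are vacant. -/
def lineE (L s : ℕ) (i : Fin d) (k : Fin d → ℤ) (n : ℕ) : Set (Cfg d) :=
  {ω | ∀ t < n, ω (pt L s i k t) = false}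

lemma lineE_measurable (L s : ℕ) (i : Fin d) (k : Fin d → ℤ) (n : ℕ) :
    MeasurableSet[coordSigma d (pt L s i k '' Set.Iio n)] (lineE L s i k n) := by
  have h := coordSigma_forall_false (A := pt L s i k '' Set.Iio n)
    ((Set.finite_Iio n).image _).countable
  convert h using 1
  ext ω
  simp [lineE, Set.forall_mem_image]

variable {Q : Measure (Cfg d)}

lemma measure_point_false (hQ : Assumptions d Q) (x : Fin d → ℤ) :
    Q {ω : Cfg d | ω x = false} = Q {ω : Cfg d | ω 0 = false} := by
  have hm0 : MeasurableSet ((fun ω : Cfg d => ω 0) ⁻¹' {false}) :=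
    (measurable_pi_apply (0 : Fin d → ℤ)) (measurableSet_singleton false)
  have hm : NullMeasurableSet {ω : Cfg d | ω 0 = false} Q := hm0.nullMeasurableSet
  have h := (hQ.a3 x).measure_preimage hm
  rw [← h]
  congr 1
  ext ω
  simp [shift]

lemma line_bound (hQ : Assumptions d Q) {ℓ : ℝ}
    (hind : ∀ A B : Set (Fin d → ℤ),
      (∀ x ∈ A, ∀ y ∈ B, ℓ ≤ nrm d (x - y)) → Indep (coordSigma d A) (coordSigma d B) Q)
    {s : ℕ} (hs : ℓ ≤ s) (L : ℕ) (i : Fin d) (k : Fin d → ℤ) :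
    ∀ n : ℕ, Q (lineE L s i k n) ≤ (Q {ω : Cfg d | ω 0 = false}) ^ n := by
  haveI := hQ.prob
  intro n
  induction n with
  | zero =>
    have : lineE L s i k 0 = Set.univ := by ext ω; simp [lineE]
    simp [this]
  | succ n ih =>
    have hsplit : lineE L s i k (n + 1) =
        lineE L s i k n ∩ {ω | ω (pt L s i k n) = false} := by
      ext ω
      constructor
      · intro hω
        exact ⟨fun t ht => hω t (ht.trans (Nat.lt_succ_self n)), hω n (Nat.lt_succ_self n)⟩
      · rintro ⟨h1, h2⟩ t ht
        rcases Nat.lt_succ_iff_lt_or_eq.1 ht with h | h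
        · exact h1 t h
        · subst h; exact h2
    have hsep : ∀ x ∈ pt L s i k '' Set.Iio n, ∀ y ∈ ({pt L s i k n} : Set (Fin d → ℤ)),
        ℓ ≤ nrm d (x - y) := by
      rintro x ⟨t, ht, rfl⟩ y rfl
      rw [pt_sub, nrm_single]
      have htn : (t : ℤ) < (n : ℤ) := by exact_mod_cast ht
      have habs : (s : ℤ) ≤ |(t : ℤ) * s - (n : ℤ) * s| := by
        have : (t : ℤ) * s - (n : ℤ) * s = -(((n : ℤ) - t) * s) := by ring
        rw [this, abs_neg, abs_mul]
        have h1 : (1 : ℤ) ≤ |(n : ℤ) - t| := by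
          rw [abs_of_nonneg (by omega)]; omega
        have h2 : |(s : ℤ)| = (s : ℤ) := abs_of_nonneg (by positivity)
        nlinarith [abs_nonneg ((s : ℤ))]
      calc ℓ ≤ (s : ℝ) := hs
        _ ≤ |((t : ℤ) * s - (n : ℤ) * s : ℤ)| := by exact_mod_cast habs
        _ = |(((t : ℤ) * s - (n : ℤ) * s : ℤ) : ℝ)| := by push_cast; ring_nf
    have hIndep := hind _ _ hsep
    have hmul := (hIndep.indepSet_of_measurableSet
      (lineE_measurable L s i k n) (coordSigma_single_false (pt L s i k n))).measure_inter_eq_mul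
    rw [hsplit, hmul, measure_point_false hQ, pow_succ]
    exact mul_le_mul_left ih _

end Aux

/-- **unblocked cubes are rare.**
`p_L = Q(B_L(0) is unblocked) → 0` as `L → ∞`. -/
theorem unblocked_prob_tendsto_zero (d : ℕ) (hd : 1 ≤ d)
    (Q : Measure (Cfg d)) (hQ : Assumptions d Q) :
    Tendsto (fun L : ℕ => Q {ω | ¬ Blocked d L ω}) atTop (𝓝 0) := by
  haveI := hQ.prob
  obtain ⟨ℓ, hℓpos, hind⟩ := hQ.a2
  set s : ℕ := ⌈ℓ⌉₊ with hsdef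
  have hs1 : 1 ≤ s := Nat.one_le_ceil_iff.2 hℓpos
  have hs0 : 0 < s := hs1
  have hℓs : ℓ ≤ (s : ℝ) := Nat.le_ceil ℓ
  set q : ℝ≥0∞ := Q {ω : Cfg d | ω 0 = false} with hqdef
  have hq_ne_top : q ≠ ⊤ := measure_ne_top Q _
  have hq_lt_one : q < 1 := by
    have hcompl : {ω : Cfg d | ω 0 = false} = (Omega0 d)ᶜ := by
      ext ω; simp [Omega0, Bool.not_eq_true]
    have hOeq : Omega0 d = (fun ω : Cfg d => ω 0) ⁻¹' {true} := rfl
    have hmeas : MeasurableSet (Omega0 d) := by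
      rw [hOeq]
      exact (measurable_pi_apply (0 : Fin d → ℤ)) (measurableSet_singleton true)
    rw [hqdef, hcompl, measure_compl hmeas (measure_ne_top Q _), measure_univ]
    exact ENNReal.sub_lt_self ENNReal.one_ne_top one_ne_zero hQ.a1_pos.ne'
  set r : ℝ := q.toReal with hrdef
  have hr0 : 0 ≤ r := ENNReal.toReal_nonneg
  have hr1 : r < 1 := by
    have := (ENNReal.toReal_lt_toReal hq_ne_top ENNReal.one_ne_top).2 hq_lt_one
    simpa using this
  set K : ℕ → Finset (Fin d → ℤ) :=
    fun L => Fintype.piFinset fun _ => Finset.Icc (-(L : ℤ)) ((L : ℤ) - 1) with hK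
  -- inclusion of the unblocked event into a finite union of line events
  have hincl : ∀ L : ℕ, 1 ≤ L →
      {ω : Cfg d | ¬ Blocked d L ω} ⊆
        ⋃ z ∈ (Finset.univ ×ˢ K L : Finset (Fin d × (Fin d → ℤ))),
          lineE L s z.1 z.2 (2 * L / s) := by
    intro L hL ω hω
    simp only [Set.mem_setOf_eq, Blocked] at hω
    push_neg at hω
    obtain ⟨i, k, hk, hline⟩ := hω
    set k' : Fin d → ℤ := fun j => if j = i then 0 else k j with hk'
    have hkmem : k' ∈ K L := by
      rw [hK, Fintype.mem_piFinset]
      intro j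
      rw [Finset.mem_Icc]
      by_cases hj : j = i
      · simp only [hk', hj, if_pos rfl]; omega
      · have := hk j hj; simp only [hk', if_neg hj]; omega
    have hmem : (i, k') ∈ (Finset.univ ×ˢ K L : Finset (Fin d × (Fin d → ℤ))) :=
      Finset.mem_product.2 ⟨Finset.mem_univ i, hkmem⟩
    refine Set.mem_biUnion hmem ?_
    intro t ht
    have hts : t * s < 2 * L := by
      calc t * s < t * s + s := by omega
        _ = (t + 1) * s := by ring
        _ ≤ (2 * L / s) * s := Nat.mul_le_mul_right _ ht
        _ ≤ 2 * L := Nat.div_mul_le_self _ _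
    have htsZ : (t : ℤ) * (s : ℤ) < 2 * (L : ℤ) := by exact_mod_cast hts
    have hup : pt L s i k' t = Function.update k i (-(L : ℤ) + t * s) := by
      funext j
      by_cases hj : j = i
      · subst hj; simp [pt]
      · simp [pt, Function.update_of_ne hj, hk', hj]
    have h0 : (0 : ℤ) ≤ (t : ℤ) * (s : ℤ) := by positivity
    have h := hline (-(L : ℤ) + t * s) (by linarith) (by linarith)
    rw [hup]
    exact Bool.not_eq_true _ ▸ h
  -- the quantitative bound
  set g : ℕ → ℝ≥0∞ := fun m => ((d * (2 * s * m) ^ d : ℕ) : ℝ≥0∞) * q ^ m with hg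
  have hbound : ∀ L : ℕ, s ≤ L → Q {ω : Cfg d | ¬ Blocked d L ω} ≤ g (2 * L / s) := by
    intro L hL
    have hL1 : 1 ≤ L := hs1.trans hL
    have hm1 : 1 ≤ 2 * L / s := by
      rw [Nat.le_div_iff_mul_le hs0]; omega
    have h2L : 2 * L ≤ 2 * s * (2 * L / s) := by
      have hmod := Nat.div_add_mod (2 * L) s
      have hltm := Nat.mod_lt (2 * L) hs0
      have hX : s * 1 ≤ s * (2 * L / s) := Nat.mul_le_mul_left s hm1
      have : 2 * s * (2 * L / s) = 2 * (s * (2 * L / s)) := by ring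
      omega
    have hcard : (Finset.univ ×ˢ K L : Finset (Fin d × (Fin d → ℤ))).card
        ≤ d * (2 * s * (2 * L / s)) ^ d := by
      have hIcc : (Finset.Icc (-(L : ℤ)) ((L : ℤ) - 1)).card = 2 * L := by
        rw [Int.card_Icc]; omega
      have : (Finset.univ ×ˢ K L : Finset (Fin d × (Fin d → ℤ))).card = d * (2 * L) ^ d := by
        rw [Finset.card_product, Finset.card_univ, Fintype.card_fin, hK,
          Fintype.card_piFinset]
        simp [hIcc]
      rw [this]
      exact Nat.mul_le_mul_left d (Nat.pow_le_pow_left h2L d)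
    calc Q {ω : Cfg d | ¬ Blocked d L ω}
        ≤ Q (⋃ z ∈ (Finset.univ ×ˢ K L : Finset (Fin d × (Fin d → ℤ))),
            lineE L s z.1 z.2 (2 * L / s)) := measure_mono (hincl L hL1)
      _ ≤ ∑ z ∈ (Finset.univ ×ˢ K L : Finset (Fin d × (Fin d → ℤ))),
            Q (lineE L s z.1 z.2 (2 * L / s)) := measure_biUnion_finset_le _ _
      _ ≤ (Finset.univ ×ˢ K L : Finset (Fin d × (Fin d → ℤ))).card • q ^ (2 * L / s) :=
            Finset.sum_le_card_nsmul _ _ _ fun z _ => line_bound hQ hind hℓs L z.1 z.2 _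
      _ = ((Finset.univ ×ˢ K L : Finset (Fin d × (Fin d → ℤ))).card : ℝ≥0∞)
            * q ^ (2 * L / s) := nsmul_eq_mul _ _
      _ ≤ g (2 * L / s) := mul_le_mul_left (by exact_mod_cast Nat.cast_le.2 hcard) _
  -- the bound tends to zero
  have hgC : ∀ m : ℕ, g m = ENNReal.ofReal (((d * (2 * s) ^ d : ℕ) : ℝ) * ((m : ℝ) ^ d * r ^ m)) := by
    intro m
    have hqr : q = ENNReal.ofReal r := (ENNReal.ofReal_toReal hq_ne_top).symm
    show ((d * (2 * s * m) ^ d : ℕ) : ℝ≥0∞) * q ^ m = _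
    rw [hqr, ← ENNReal.ofReal_pow hr0, ← ENNReal.ofReal_natCast (d * (2 * s * m) ^ d),
      ← ENNReal.ofReal_mul (by positivity)]
    congr 1
    push_cast
    ring
  have hreal : Tendsto (fun m : ℕ => ((d * (2 * s) ^ d : ℕ) : ℝ) * ((m : ℝ) ^ d * r ^ m))
      atTop (𝓝 0) := by
    have h := (tendsto_pow_const_mul_const_pow_of_lt_one d hr0 hr1).const_mul
      ((d * (2 * s) ^ d : ℕ) : ℝ)
    simpa using h
  have hg0 : Tendsto g atTop (𝓝 0) := by
    have h := ENNReal.tendsto_ofReal hreal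
    rw [ENNReal.ofReal_zero] at h
    exact Tendsto.congr (fun m => (hgC m).symm) h
  have hdiv : Tendsto (fun L : ℕ => 2 * L / s) atTop atTop := by
    refine tendsto_atTop.2 fun b => eventually_atTop.2 ⟨b * s, fun L hL => ?_⟩
    rw [Nat.le_div_iff_mul_le hs0]
    omega
  refine tendsto_of_tendsto_of_tendsto_of_le_of_le' tendsto_const_nhds (hg0.comp hdiv)
    (Eventually.of_forall fun L => zero_le) (eventually_atTop.2 ⟨s, fun L hL => hbound L hL⟩)

end RWDPP
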